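/- Let a : ℝ → ℝ be continuous and nondecreasing, and let f : ℝ² → ℝ be the unique continuous function satisfying f(s, a(τ)·s²/2 + τ) = a(τ)·s for all (s, τ) ∈ ℝ². Then f is locally Lipschitz on ℝ² \ {(y,t) : y = 0}. Moreover, if a is locally Lipschitz, then f is locally Lipschitz on all of ℝ². -/

import Mathlib

open Set Metric Filter

private lemma aux_exists (a : ℝ → ℝ) (hc : Continuous a) (hm : Monotone a) (s t : ℝ) :
    ∃ τ, a τ * s ^ 2 / 2 + τ = t := by
  have hg : Continuous fun τ => a τ * s ^ 2 / 2 + τ :=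
    ((hc.mul continuous_const).div_const 2).add continuous_id
  have htop : Tendsto (fun τ => a τ * s ^ 2 / 2 + τ) atTop atTop := by
    apply tendsto_atTop_mono' atTop _
      (tendsto_atTop_add_const_left _ (a 0 * s ^ 2 / 2) tendsto_id)
    filter_upwards [eventually_ge_atTop (0:ℝ)] with τ hτ
    have := hm hτ
    simp only [id_eq]
    nlinarith [sq_nonneg s, mul_nonneg (sub_nonneg.2 this) (sq_nonneg s)]
  have hbot : Tendsto (fun τ => a τ * s ^ 2 / 2 + τ) atBot atBot := by
    apply tendsto_atBot_mono' atBot _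
      (tendsto_atBot_add_const_left _ (a 0 * s ^ 2 / 2) tendsto_id)
    filter_upwards [eventually_le_atBot (0:ℝ)] with τ hτ
    have := hm hτ
    simp only [id_eq]
    nlinarith [sq_nonneg s, mul_nonneg (sub_nonneg.2 this) (sq_nonneg s)]
  exact hg.surjective htop hbot t

private lemma aux_bound (a : ℝ → ℝ) (hm : Monotone a) {s t τ : ℝ}
    (h : a τ * s ^ 2 / 2 + τ = t) : |τ| ≤ |t| + |a 0| * s ^ 2 / 2 := by
  rcases le_total 0 τ with h0 | h0
  · have h1 := hm h0
    rw [abs_le]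
    constructor
    · nlinarith [abs_nonneg t, abs_nonneg (a 0), sq_nonneg s,
        mul_nonneg (abs_nonneg (a 0)) (sq_nonneg s)]
    · nlinarith [le_abs_self t, neg_abs_le (a 0), sq_nonneg s,
        mul_nonneg (sub_nonneg.2 h1) (sq_nonneg s)]
  · have h1 := hm h0
    rw [abs_le]
    constructor
    · nlinarith [neg_abs_le t, le_abs_self (a 0), sq_nonneg s,
        mul_nonneg (sub_nonneg.2 h1) (sq_nonneg s)]
    · nlinarith [abs_nonneg t, abs_nonneg (a 0), sq_nonneg s,
        mul_nonneg (abs_nonneg (a 0)) (sq_nonneg s)]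

private lemma aux_order (a : ℝ → ℝ) (hm : Monotone a) {s τ τ'' : ℝ}
    (h : a τ * s ^ 2 / 2 + τ ≤ a τ'' * s ^ 2 / 2 + τ'') : τ ≤ τ'' := by
  by_contra hlt
  push_neg at hlt
  have h1 := hm hlt.le
  nlinarith [mul_nonneg (sub_nonneg.2 h1) (sq_nonneg s)]

/-- one-sided vertical estimate off the axis -/
private lemma aux_vert1 (a : ℝ → ℝ) (hm : Monotone a) {s τ τ'' : ℝ}
    (h : a τ * s ^ 2 / 2 + τ ≤ a τ'' * s ^ 2 / 2 + τ'') :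
    |a τ'' * s - a τ * s| * |s| ≤ 2 * ((a τ'' * s ^ 2 / 2 + τ'') - (a τ * s ^ 2 / 2 + τ)) := by
  have hτ : τ ≤ τ'' := aux_order a hm h
  have hd : 0 ≤ a τ'' - a τ := sub_nonneg.2 (hm hτ)
  have h1 : |a τ'' * s - a τ * s| = (a τ'' - a τ) * |s| := by
    rw [show a τ'' * s - a τ * s = (a τ'' - a τ) * s by ring, abs_mul, abs_of_nonneg hd]
  rw [h1]
  have h2 : (a τ'' - a τ) * |s| * |s| = (a τ'' - a τ) * s ^ 2 := by
    rw [mul_assoc, ← abs_mul, ← sq, abs_of_nonneg (sq_nonneg s)]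
  rw [h2]
  linarith

/-- symmetric vertical estimate off the axis -/
private lemma aux_vert (a : ℝ → ℝ) (hm : Monotone a) (s τ τ'' : ℝ) :
    |a τ'' * s - a τ * s| * |s| ≤ 2 * |(a τ'' * s ^ 2 / 2 + τ'') - (a τ * s ^ 2 / 2 + τ)| := by
  rcases le_total (a τ * s ^ 2 / 2 + τ) (a τ'' * s ^ 2 / 2 + τ'') with h | h
  · have e : |(a τ'' * s ^ 2 / 2 + τ'') - (a τ * s ^ 2 / 2 + τ)|
        = (a τ'' * s ^ 2 / 2 + τ'') - (a τ * s ^ 2 / 2 + τ) := abs_of_nonneg (by linarith)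
    rw [e]; exact aux_vert1 a hm h
  · have e : |(a τ'' * s ^ 2 / 2 + τ'') - (a τ * s ^ 2 / 2 + τ)|
        = (a τ * s ^ 2 / 2 + τ) - (a τ'' * s ^ 2 / 2 + τ'') := by
      rw [abs_sub_comm]; exact abs_of_nonneg (by linarith)
    rw [e, abs_sub_comm]; exact aux_vert1 a hm h

/-- one-sided horizontal estimate off the axis -/
private lemma aux_horiz1 (a : ℝ → ℝ) (hm : Monotone a) {s s' τ τ' M δ R : ℝ}
    (h : a τ * s ^ 2 / 2 + τ = a τ' * s' ^ 2 / 2 + τ') (hττ' : τ ≤ τ')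
    (hMτ' : |a τ'| ≤ M) (hδ : 0 ≤ δ) (hs : δ ≤ |s|) (hR : |s| ≤ R) (hR' : |s'| ≤ R) :
    |a τ' * s' - a τ * s| * δ ^ 2 ≤ M * (δ ^ 2 + 2 * R ^ 2) * |s' - s| := by
  have hM0 : 0 ≤ M := le_trans (abs_nonneg _) hMτ'
  have hR0 : 0 ≤ R := le_trans (abs_nonneg s) hR
  have hD : 0 ≤ a τ' - a τ := sub_nonneg.2 (hm hττ')
  have h2 : a τ' * s' ^ 2 ≤ a τ * s ^ 2 := by linarith
  have h3 : (a τ' - a τ) * s ^ 2 ≤ a τ' * (s ^ 2 - s' ^ 2) := by nlinarith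
  have h4 : a τ' * (s ^ 2 - s' ^ 2) ≤ M * (2 * R) * |s' - s| := by
    have e : |a τ' * (s ^ 2 - s' ^ 2)| = |a τ'| * |s + s'| * |s - s'| := by
      rw [show a τ' * (s ^ 2 - s' ^ 2) = a τ' * (s + s') * (s - s') by ring, abs_mul, abs_mul]
    have habs : |s + s'| ≤ 2 * R := le_trans (abs_add_le s s') (by linarith)
    calc a τ' * (s ^ 2 - s' ^ 2) ≤ |a τ' * (s ^ 2 - s' ^ 2)| := le_abs_self _
      _ = |a τ'| * |s + s'| * |s - s'| := e
      _ ≤ M * (2 * R) * |s - s'| := by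
          apply mul_le_mul _ le_rfl (abs_nonneg _) (by positivity)
          exact mul_le_mul hMτ' habs (abs_nonneg _) hM0
      _ = M * (2 * R) * |s' - s| := by rw [abs_sub_comm]
  have hδ2 : δ ^ 2 ≤ s ^ 2 := by nlinarith [sq_abs s]
  have h5 : (a τ' - a τ) * δ ^ 2 ≤ M * (2 * R) * |s' - s| :=
    le_trans (by nlinarith) (le_trans h3 h4)
  have key : a τ' * s' - a τ * s = a τ' * (s' - s) + (a τ' - a τ) * s := by ring
  have hA : |a τ' * s' - a τ * s| ≤ M * |s' - s| + (a τ' - a τ) * |s| := by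
    calc |a τ' * s' - a τ * s| = |a τ' * (s' - s) + (a τ' - a τ) * s| := by rw [key]
      _ ≤ |a τ' * (s' - s)| + |(a τ' - a τ) * s| := abs_add_le _ _
      _ = |a τ'| * |s' - s| + (a τ' - a τ) * |s| := by
          rw [abs_mul, abs_mul, abs_of_nonneg hD]
      _ ≤ M * |s' - s| + (a τ' - a τ) * |s| :=
          add_le_add (mul_le_mul_of_nonneg_right hMτ' (abs_nonneg _)) le_rfl
  calc |a τ' * s' - a τ * s| * δ ^ 2
      ≤ (M * |s' - s| + (a τ' - a τ) * |s|) * δ ^ 2 :=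
        mul_le_mul_of_nonneg_right hA (sq_nonneg δ)
    _ = M * |s' - s| * δ ^ 2 + (a τ' - a τ) * δ ^ 2 * |s| := by ring
    _ ≤ M * |s' - s| * δ ^ 2 + M * (2 * R) * |s' - s| * R := by
        have := mul_le_mul h5 hR (abs_nonneg s) (by positivity)
        linarith
    _ ≤ M * (δ ^ 2 + 2 * R ^ 2) * |s' - s| := le_of_eq (by ring)

/-- symmetric horizontal estimate off the axis -/
private lemma aux_horiz (a : ℝ → ℝ) (hm : Monotone a) {s s' τ τ' M δ R : ℝ}
    (h : a τ * s ^ 2 / 2 + τ = a τ' * s' ^ 2 / 2 + τ')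
    (hMτ : |a τ| ≤ M) (hMτ' : |a τ'| ≤ M) (hδ : 0 ≤ δ)
    (hs : δ ≤ |s|) (hs' : δ ≤ |s'|) (hR : |s| ≤ R) (hR' : |s'| ≤ R) :
    |a τ' * s' - a τ * s| * δ ^ 2 ≤ M * (δ ^ 2 + 2 * R ^ 2) * |s' - s| := by
  rcases le_total τ τ' with hττ' | hττ'
  · exact aux_horiz1 a hm h hττ' hMτ' hδ hs hR hR'
  · rw [abs_sub_comm, abs_sub_comm s' s]
    exact aux_horiz1 a hm h.symm hττ' hMτ hδ hs' hR' hR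

/-- one-sided vertical estimate near the axis (a Lipschitz) -/
private lemma aux_vert2_1 (a : ℝ → ℝ) (hm : Monotone a) {s τ τ'' L δ : ℝ}
    (h : a τ * s ^ 2 / 2 + τ ≤ a τ'' * s ^ 2 / 2 + τ'')
    (hL : |a τ'' - a τ| ≤ L * |τ'' - τ|) (hL0 : 0 ≤ L) (hs : |s| ≤ δ) :
    |a τ'' * s - a τ * s| ≤ L * δ * ((a τ'' * s ^ 2 / 2 + τ'') - (a τ * s ^ 2 / 2 + τ)) := by
  have hτ : τ ≤ τ'' := aux_order a hm h
  have hd : 0 ≤ a τ'' - a τ := sub_nonneg.2 (hm hτ)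
  have hδ0 : 0 ≤ δ := le_trans (abs_nonneg s) hs
  have hτt : τ'' - τ ≤ (a τ'' * s ^ 2 / 2 + τ'') - (a τ * s ^ 2 / 2 + τ) := by
    nlinarith [mul_nonneg hd (sq_nonneg s)]
  rw [abs_of_nonneg hd, abs_of_nonneg (sub_nonneg.2 hτ)] at hL
  have h1 : |a τ'' * s - a τ * s| = (a τ'' - a τ) * |s| := by
    rw [show a τ'' * s - a τ * s = (a τ'' - a τ) * s by ring, abs_mul, abs_of_nonneg hd]
  rw [h1]
  calc (a τ'' - a τ) * |s| ≤ (L * (τ'' - τ)) * δ :=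
        mul_le_mul hL hs (abs_nonneg s) (mul_nonneg hL0 (sub_nonneg.2 hτ))
    _ = L * δ * (τ'' - τ) := by ring
    _ ≤ L * δ * ((a τ'' * s ^ 2 / 2 + τ'') - (a τ * s ^ 2 / 2 + τ)) :=
        mul_le_mul_of_nonneg_left hτt (by positivity)

/-- symmetric vertical estimate near the axis -/
private lemma aux_vert2 (a : ℝ → ℝ) (hm : Monotone a) {s τ τ'' L δ : ℝ}
    (hL : |a τ'' - a τ| ≤ L * |τ'' - τ|) (hL0 : 0 ≤ L) (hs : |s| ≤ δ) :
    |a τ'' * s - a τ * s| ≤ L * δ * |(a τ'' * s ^ 2 / 2 + τ'') - (a τ * s ^ 2 / 2 + τ)| := by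
  have hL' : |a τ - a τ''| ≤ L * |τ - τ''| := by
    rw [abs_sub_comm, abs_sub_comm τ]; exact hL
  rcases le_total (a τ * s ^ 2 / 2 + τ) (a τ'' * s ^ 2 / 2 + τ'') with h | h
  · have e : |(a τ'' * s ^ 2 / 2 + τ'') - (a τ * s ^ 2 / 2 + τ)|
        = (a τ'' * s ^ 2 / 2 + τ'') - (a τ * s ^ 2 / 2 + τ) := abs_of_nonneg (by linarith)
    rw [e]; exact aux_vert2_1 a hm h hL hL0 hs
  · have e : |(a τ'' * s ^ 2 / 2 + τ'') - (a τ * s ^ 2 / 2 + τ)|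
        = (a τ * s ^ 2 / 2 + τ) - (a τ'' * s ^ 2 / 2 + τ'') := by
      rw [abs_sub_comm]; exact abs_of_nonneg (by linarith)
    rw [e, abs_sub_comm]; exact aux_vert2_1 a hm h hL' hL0 hs

/-- horizontal estimate near the axis (a Lipschitz) -/
private lemma aux_horiz2 (a : ℝ → ℝ) {s s' τ τ' M L δ : ℝ}
    (h : a τ * s ^ 2 / 2 + τ = a τ' * s' ^ 2 / 2 + τ')
    (hL : |a τ' - a τ| ≤ L * |τ' - τ|) (hL0 : 0 ≤ L) (hLδ : L * δ ^ 2 ≤ 1)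
    (hMτ' : |a τ'| ≤ M) (hs : |s| ≤ δ) (hs' : |s'| ≤ δ) :
    |a τ' * s' - a τ * s| ≤ M * (1 + 2 * L * δ ^ 2) * |s' - s| := by
  have hδ0 : 0 ≤ δ := le_trans (abs_nonneg s) hs
  have hM0 : 0 ≤ M := le_trans (abs_nonneg _) hMτ'
  have hsq : s ^ 2 ≤ δ ^ 2 := by nlinarith [sq_abs s, abs_nonneg s]
  have e1 : 2 * (τ' - τ) = (a τ - a τ') * s ^ 2 + a τ' * (s ^ 2 - s' ^ 2) := by
    linear_combination -2 * h
  have e2 : 2 * |τ' - τ| ≤ |a τ - a τ'| * s ^ 2 + |a τ'| * |s ^ 2 - s' ^ 2| := by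
    calc 2 * |τ' - τ| = |2 * (τ' - τ)| := by
          rw [abs_mul, abs_of_nonneg (by norm_num : (0:ℝ) ≤ 2)]
      _ = |(a τ - a τ') * s ^ 2 + a τ' * (s ^ 2 - s' ^ 2)| := by rw [e1]
      _ ≤ |(a τ - a τ') * s ^ 2| + |a τ' * (s ^ 2 - s' ^ 2)| := abs_add_le _ _
      _ = |a τ - a τ'| * s ^ 2 + |a τ'| * |s ^ 2 - s' ^ 2| := by
          rw [abs_mul, abs_mul, abs_of_nonneg (sq_nonneg s)]
  have e3 : |a τ - a τ'| * s ^ 2 ≤ |τ' - τ| := by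
    rw [abs_sub_comm]
    calc |a τ' - a τ| * s ^ 2 ≤ (L * |τ' - τ|) * δ ^ 2 :=
          mul_le_mul hL hsq (sq_nonneg s) (by positivity)
      _ = (L * δ ^ 2) * |τ' - τ| := by ring
      _ ≤ 1 * |τ' - τ| := mul_le_mul_of_nonneg_right hLδ (abs_nonneg _)
      _ = |τ' - τ| := one_mul _
  have e4 : |a τ'| * |s ^ 2 - s' ^ 2| ≤ M * (2 * δ) * |s' - s| := by
    calc |a τ'| * |s ^ 2 - s' ^ 2| = |a τ'| * (|s + s'| * |s - s'|) := by
          rw [show s ^ 2 - s' ^ 2 = (s + s') * (s - s') from by ring, abs_mul]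
      _ ≤ M * ((2 * δ) * |s - s'|) := by
          apply mul_le_mul hMτ' _ (by positivity) hM0
          exact mul_le_mul_of_nonneg_right
            (le_trans (abs_add_le s s') (by linarith)) (abs_nonneg _)
      _ = M * (2 * δ) * |s' - s| := by rw [abs_sub_comm]; ring
  have e5 : |τ' - τ| ≤ 2 * M * δ * |s' - s| := by linarith
  have key : a τ' * s' - a τ * s = a τ' * (s' - s) + (a τ' - a τ) * s := by ring
  calc |a τ' * s' - a τ * s| ≤ |a τ' * (s' - s)| + |(a τ' - a τ) * s| := by
        rw [key]; exact abs_add_le _ _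
    _ = |a τ'| * |s' - s| + |a τ' - a τ| * |s| := by rw [abs_mul, abs_mul]
    _ ≤ M * |s' - s| + (L * (2 * M * δ * |s' - s|)) * δ := by
        have t1 : |a τ'| * |s' - s| ≤ M * |s' - s| :=
          mul_le_mul_of_nonneg_right hMτ' (abs_nonneg _)
        have t2 : |a τ' - a τ| * |s| ≤ (L * (2 * M * δ * |s' - s|)) * δ := by
          apply mul_le_mul _ hs (abs_nonneg s) (by positivity)
          exact le_trans hL (mul_le_mul_of_nonneg_left e5 hL0)
        linarith
    _ = M * (1 + 2 * L * δ ^ 2) * |s' - s| := by ring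

/-- bound on |a| on [-B,B] from monotonicity -/
private lemma aux_absA (a : ℝ → ℝ) (hm : Monotone a) {τ B : ℝ} (hτ : |τ| ≤ B) :
    |a τ| ≤ max |a (-B)| |a B| := by
  rw [abs_le] at hτ ⊢
  constructor
  · calc -(max |a (-B)| |a B|) ≤ -|a (-B)| := neg_le_neg (le_max_left _ _)
      _ ≤ a (-B) := neg_abs_le _
      _ ≤ a τ := hm hτ.1
  · exact le_trans (hm hτ.2) (le_trans (le_abs_self _) (le_max_right _ _))

/-- a locally Lipschitz function is Lipschitz on compact intervals -/
private lemma aux_compactLip (a : ℝ → ℝ) (ha : LocallyLipschitz a) (B : ℝ) :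
    ∃ L : ℝ, 0 ≤ L ∧ ∀ x ∈ Icc (-B) B, ∀ y ∈ Icc (-B) B, |a x - a y| ≤ L * |x - y| := by
  have hK : IsCompact (Icc (-B) B) := isCompact_Icc
  have hcont : Continuous a := ha.continuous
  choose Kf Tf hTf hlip using ha
  obtain ⟨F, _, hF⟩ := hK.elim_nhds_subcover (fun x => interior (Tf x))
      (fun x _ => interior_mem_nhds.2 (hTf x))
  obtain ⟨δ, hδ0, hball⟩ := lebesgue_number_lemma_of_metric (c := fun i : F => interior (Tf i))
      hK (fun _ => isOpen_interior) (fun z hz => by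
        rcases mem_iUnion₂.1 (hF hz) with ⟨x, hxF, hx⟩
        exact mem_iUnion.2 ⟨⟨x, hxF⟩, hx⟩)
  obtain ⟨M, hMb⟩ := hK.exists_bound_of_continuousOn hcont.continuousOn
  set L0 : NNReal := F.sup Kf with hL0def
  refine ⟨max (L0 : ℝ) (2 * max M 0 / δ), le_trans L0.coe_nonneg (le_max_left _ _),
    fun x hx y hy => ?_⟩
  rcases lt_or_ge (dist x y) δ with hlt | hge
  · obtain ⟨i, hi⟩ := hball x hx
    have hxi : x ∈ Tf i := interior_subset (hi (mem_ball_self hδ0))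
    have hyi : y ∈ Tf i := interior_subset (hi (by rwa [mem_ball, dist_comm]))
    have h1 : dist (a x) (a y) ≤ (Kf i : ℝ) * dist x y := (hlip i).dist_le_mul x hxi y hyi
    have h2 : (Kf i : ℝ) ≤ (L0 : ℝ) := by
      exact_mod_cast NNReal.coe_le_coe.2 (Finset.le_sup i.2)
    calc |a x - a y| = dist (a x) (a y) := (Real.dist_eq _ _).symm
      _ ≤ (Kf i : ℝ) * dist x y := h1
      _ ≤ max (L0 : ℝ) (2 * max M 0 / δ) * |x - y| := by
          rw [Real.dist_eq] at *
          exact mul_le_mul (le_trans h2 (le_max_left _ _)) le_rfl (abs_nonneg _)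
            (le_trans L0.coe_nonneg (le_max_left _ _))
  · have hax : |a x| ≤ max M 0 := le_trans (by rw [← Real.norm_eq_abs]; exact hMb x hx) (le_max_left _ _)
    have hay : |a y| ≤ max M 0 := le_trans (by rw [← Real.norm_eq_abs]; exact hMb y hy) (le_max_left _ _)
    have hxy : δ ≤ |x - y| := by rwa [Real.dist_eq] at hge
    calc |a x - a y| ≤ |a x| + |a y| := abs_sub _ _
      _ ≤ 2 * max M 0 := by linarith
      _ = (2 * max M 0 / δ) * δ := by field_simp
      _ ≤ (2 * max M 0 / δ) * |x - y| :=
          mul_le_mul_of_nonneg_left hxy (by positivity)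
      _ ≤ max (L0 : ℝ) (2 * max M 0 / δ) * |x - y| :=
          mul_le_mul_of_nonneg_right (le_max_right _ _) (abs_nonneg _)

private lemma aux_combine (f : ℝ × ℝ → ℝ) (p : ℝ × ℝ) (r Kh Kv : ℝ)
    (hKh : 0 ≤ Kh) (hKv : 0 ≤ Kv)
    (H : ∀ q ∈ ball p r, ∀ q' ∈ ball p r, q.2 = q'.2 → |f q' - f q| ≤ Kh * |q'.1 - q.1|)
    (V : ∀ q ∈ ball p r, ∀ q' ∈ ball p r, q.1 = q'.1 → |f q' - f q| ≤ Kv * |q'.2 - q.2|) :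
    LipschitzOnWith (Real.toNNReal (Kh + Kv)) f (ball p r) := by
  rw [lipschitzOnWith_iff_dist_le_mul]
  intro q hq q' hq'
  have hmix : (q'.1, q.2) ∈ ball p r := by
    rw [mem_ball, Prod.dist_eq, max_lt_iff] at hq hq' ⊢
    exact ⟨hq'.1, hq.2⟩
  have h1 := H q hq (q'.1, q.2) hmix rfl
  have h2 := V (q'.1, q.2) hmix q' hq' rfl
  simp only at h1 h2
  have hd1 : |q'.1 - q.1| ≤ dist q q' := by
    rw [Prod.dist_eq, abs_sub_comm, ← Real.dist_eq]
    exact le_max_left _ _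
  have hd2 : |q'.2 - q.2| ≤ dist q q' := by
    rw [Prod.dist_eq, abs_sub_comm, ← Real.dist_eq]
    exact le_max_right _ _
  have key : |f q - f q'| ≤ Kh * |q'.1 - q.1| + Kv * |q'.2 - q.2| := by
    have e : f q - f q' = -((f (q'.1, q.2) - f q) + (f q' - f (q'.1, q.2))) := by ring
    rw [e, abs_neg]
    exact le_trans (abs_add_le _ _) (add_le_add h1 h2)
  rw [Real.dist_eq, Real.coe_toNNReal _ (by positivity)]
  calc |f q - f q'| ≤ Kh * |q'.1 - q.1| + Kv * |q'.2 - q.2| := key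
    _ ≤ Kh * dist q q' + Kv * dist q q' :=
        add_le_add (mul_le_mul_of_nonneg_left hd1 hKh) (mul_le_mul_of_nonneg_left hd2 hKv)
    _ = (Kh + Kv) * dist q q' := by ring

/-- The graphical-strip function f with f(s, a(τ)s²/2+τ) = a(τ)s is locally Lipschitz off
the axis {y = 0}; if a is locally Lipschitz it is locally Lipschitz on all of ℝ². -/
theorem stmt_7 (a : ℝ → ℝ) (hc : Continuous a) (hm : Monotone a)
    (f : ℝ × ℝ → ℝ) (hf : Continuous f)
    (heq : ∀ s τ, f (s, a τ * s ^ 2 / 2 + τ) = a τ * s) :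
    (∀ p : ℝ × ℝ, p.1 ≠ 0 → ∃ (K : NNReal) (U : Set (ℝ × ℝ)), IsOpen U ∧ p ∈ U ∧
      U ⊆ {q : ℝ × ℝ | q.1 ≠ 0} ∧ LipschitzOnWith K f U) ∧
    (LocallyLipschitz a → LocallyLipschitz f) := by
  have hex : ∀ s t : ℝ, ∃ τ, a τ * s ^ 2 / 2 + τ = t := aux_exists a hc hm
  have hfval : ∀ (s t τ : ℝ), a τ * s ^ 2 / 2 + τ = t → f (s, t) = a τ * s := by
    intro s t τ h; rw [← h]; exact heq s τ
  have part1 : ∀ p : ℝ × ℝ, p.1 ≠ 0 → ∃ (K : NNReal) (U : Set (ℝ × ℝ)), IsOpen U ∧ p ∈ U ∧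
      U ⊆ {q : ℝ × ℝ | q.1 ≠ 0} ∧ LipschitzOnWith K f U := by
    intro p hp
    have hp0 : 0 < |p.1| := abs_pos.2 hp
    set δ := |p.1| / 2 with hδdef
    have hδ0 : 0 < δ := by positivity
    set R := 3 * |p.1| / 2 with hRdef
    set T := |p.2| + δ with hTdef
    set B := T + |a 0| * R ^ 2 / 2 with hBdef
    set M := max |a (-B)| |a B| with hMdef
    have hM0 : 0 ≤ M := le_trans (abs_nonneg _) (le_max_left _ _)
    have hmem : ∀ q : ℝ × ℝ, q ∈ ball p δ → δ ≤ |q.1| ∧ |q.1| ≤ R ∧ |q.2| ≤ T := by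
      intro q hq
      rw [mem_ball, Prod.dist_eq, max_lt_iff, Real.dist_eq, Real.dist_eq] at hq
      obtain ⟨d1, d2⟩ := hq
      have e1 : |p.1| - |q.1| ≤ |q.1 - p.1| := by
        rw [abs_sub_comm]; exact abs_sub_abs_le_abs_sub _ _
      have e2 : |q.1| - |p.1| ≤ |q.1 - p.1| := abs_sub_abs_le_abs_sub _ _
      have e3 : |q.2| - |p.2| ≤ |q.2 - p.2| := abs_sub_abs_le_abs_sub _ _
      refine ⟨by rw [hδdef] at *; linarith, by rw [hδdef, hRdef] at *; linarith,
        by rw [hTdef, hδdef] at *; linarith⟩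
    have hτB : ∀ (s t τ : ℝ), |s| ≤ R → |t| ≤ T → a τ * s ^ 2 / 2 + τ = t → |a τ| ≤ M := by
      intro s t τ hs ht h
      have h1 := aux_bound a hm h
      have hs2 : s ^ 2 ≤ R ^ 2 := by nlinarith [abs_nonneg s, sq_abs s]
      have h2 : |τ| ≤ B := by
        rw [hBdef]
        calc |τ| ≤ |t| + |a 0| * s ^ 2 / 2 := h1
          _ ≤ T + |a 0| * R ^ 2 / 2 := by nlinarith [abs_nonneg (a 0)]
      exact aux_absA a hm h2
    set Kh := M * (δ ^ 2 + 2 * R ^ 2) / δ ^ 2 with hKhdef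
    set Kv := 2 / δ with hKvdef
    have hKh0 : 0 ≤ Kh := by rw [hKhdef]; positivity
    have hKv0 : 0 ≤ Kv := by rw [hKvdef]; positivity
    refine ⟨Real.toNNReal (Kh + Kv), ball p δ, isOpen_ball, mem_ball_self hδ0, ?_, ?_⟩
    · intro q hq
      have h1 := (hmem q hq).1
      simp only [mem_setOf_eq]
      intro h0
      rw [h0, abs_zero] at h1
      linarith
    · apply aux_combine f p δ Kh Kv hKh0 hKv0
      · -- horizontal
        intro q hq q' hq' ht
        obtain ⟨hδq, hRq, hTq⟩ := hmem q hq
        obtain ⟨hδq', hRq', hTq'⟩ := hmem q' hq'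
        obtain ⟨τ, hτ⟩ := hex q.1 q.2
        obtain ⟨τ', hτ'⟩ := hex q'.1 q'.2
        have hfq : f q = a τ * q.1 := by
          rw [← Prod.mk.eta (p := q)]; exact hfval _ _ _ hτ
        have hfq' : f q' = a τ' * q'.1 := by
          rw [← Prod.mk.eta (p := q')]; exact hfval _ _ _ hτ'
        have heqt : a τ * q.1 ^ 2 / 2 + τ = a τ' * q'.1 ^ 2 / 2 + τ' := by
          rw [hτ, hτ', ht]
        have hMτ := hτB _ _ _ hRq hTq hτ
        have hMτ' := hτB _ _ _ hRq' hTq' hτ'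
        have key := aux_horiz a hm heqt hMτ hMτ' hδ0.le hδq hδq' hRq hRq'
        rw [hfq, hfq', hKhdef, div_mul_eq_mul_div, le_div_iff₀ (by positivity)]
        exact key
      · -- vertical
        intro q hq q' hq' hs
        obtain ⟨hδq', hRq', hTq'⟩ := hmem q' hq'
        obtain ⟨τ, hτ⟩ := hex q.1 q.2
        obtain ⟨τ', hτ'⟩ := hex q'.1 q'.2
        have hfq : f q = a τ * q.1 := by
          rw [← Prod.mk.eta (p := q)]; exact hfval _ _ _ hτ
        have hfq' : f q' = a τ' * q'.1 := by
          rw [← Prod.mk.eta (p := q')]; exact hfval _ _ _ hτ'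
        rw [hs] at hτ
        have key := aux_vert a hm q'.1 τ τ'
        rw [hτ, hτ'] at key
        rw [hfq, hfq', hs, hKvdef, div_mul_eq_mul_div, le_div_iff₀ hδ0]
        calc |a τ' * q'.1 - a τ * q'.1| * δ
            ≤ |a τ' * q'.1 - a τ * q'.1| * |q'.1| :=
              mul_le_mul_of_nonneg_left hδq' (abs_nonneg _)
          _ ≤ 2 * |q'.2 - q.2| := key
  refine ⟨part1, fun ha => ?_⟩
  intro p
  by_cases hp : p.1 = 0
  · -- on the axis
    set T := |p.2| + 1 with hTdef
    set B := T + |a 0| * 1 / 2 with hBdef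
    obtain ⟨L, hL0, hLip⟩ := aux_compactLip a ha B
    set δ := min 1 (1 / (L + 1)) with hδdef
    have hδ0 : 0 < δ := lt_min one_pos (by positivity)
    have hδ1 : δ ≤ 1 := min_le_left _ _
    have hLδ : L * δ ^ 2 ≤ 1 := by
      have h1 : δ ≤ 1 / (L + 1) := min_le_right _ _
      have h2 : δ ^ 2 ≤ (1 / (L + 1)) ^ 2 := by nlinarith
      calc L * δ ^ 2 ≤ L * (1 / (L + 1)) ^ 2 := mul_le_mul_of_nonneg_left h2 hL0
        _ ≤ 1 := by
            rw [div_pow, one_pow, mul_one_div]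
            exact (div_le_one (by positivity)).2 (by nlinarith)
    set M := max |a (-B)| |a B| with hMdef
    have hM0 : 0 ≤ M := le_trans (abs_nonneg _) (le_max_left _ _)
    have hmem : ∀ q : ℝ × ℝ, q ∈ ball p δ → |q.1| ≤ δ ∧ |q.2| ≤ T := by
      intro q hq
      rw [mem_ball, Prod.dist_eq, max_lt_iff, Real.dist_eq, Real.dist_eq, hp, sub_zero] at hq
      obtain ⟨d1, d2⟩ := hq
      have e3 : |q.2| - |p.2| ≤ |q.2 - p.2| := abs_sub_abs_le_abs_sub _ _
      exact ⟨d1.le, by rw [hTdef]; linarith⟩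
    have hτB : ∀ (s t τ : ℝ), |s| ≤ δ → |t| ≤ T → a τ * s ^ 2 / 2 + τ = t → |τ| ≤ B := by
      intro s t τ hs ht h
      have h1 := aux_bound a hm h
      have hs2 : s ^ 2 ≤ 1 := by nlinarith [abs_nonneg s, sq_abs s]
      rw [hBdef]
      calc |τ| ≤ |t| + |a 0| * s ^ 2 / 2 := h1
        _ ≤ T + |a 0| * 1 / 2 := by nlinarith [abs_nonneg (a 0)]
    have haL : ∀ τ τ' : ℝ, |τ| ≤ B → |τ'| ≤ B → |a τ' - a τ| ≤ L * |τ' - τ| := by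
      intro τ τ' h h'
      exact hLip τ' (mem_Icc.2 ⟨(abs_le.1 h').1, (abs_le.1 h').2⟩)
        τ (mem_Icc.2 ⟨(abs_le.1 h).1, (abs_le.1 h).2⟩)
    set Kh := M * (1 + 2 * L * δ ^ 2) with hKhdef
    set Kv := L * δ with hKvdef
    have hKh0 : 0 ≤ Kh := by rw [hKhdef]; positivity
    have hKv0 : 0 ≤ Kv := by rw [hKvdef]; positivity
    refine ⟨Real.toNNReal (Kh + Kv), ball p δ, ball_mem_nhds p hδ0, ?_⟩
    apply aux_combine f p δ Kh Kv hKh0 hKv0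
    · -- horizontal
      intro q hq q' hq' ht
      obtain ⟨hδq, hTq⟩ := hmem q hq
      obtain ⟨hδq', hTq'⟩ := hmem q' hq'
      obtain ⟨τ, hτ⟩ := hex q.1 q.2
      obtain ⟨τ', hτ'⟩ := hex q'.1 q'.2
      have hfq : f q = a τ * q.1 := by
        rw [← Prod.mk.eta (p := q)]; exact hfval _ _ _ hτ
      have hfq' : f q' = a τ' * q'.1 := by
        rw [← Prod.mk.eta (p := q')]; exact hfval _ _ _ hτ'
      have heqt : a τ * q.1 ^ 2 / 2 + τ = a τ' * q'.1 ^ 2 / 2 + τ' := by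
        rw [hτ, hτ', ht]
      have hτB1 := hτB _ _ _ hδq hTq hτ
      have hτB2 := hτB _ _ _ hδq' hTq' hτ'
      have hMτ' : |a τ'| ≤ M := aux_absA a hm hτB2
      rw [hfq, hfq']
      exact aux_horiz2 a heqt (haL τ τ' hτB1 hτB2) hL0 hLδ hMτ' hδq hδq'
    · -- vertical
      intro q hq q' hq' hs
      obtain ⟨hδq', hTq'⟩ := hmem q' hq'
      obtain ⟨hδq, hTq⟩ := hmem q hq
      obtain ⟨τ, hτ⟩ := hex q.1 q.2
      obtain ⟨τ', hτ'⟩ := hex q'.1 q'.2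
      have hfq : f q = a τ * q.1 := by
        rw [← Prod.mk.eta (p := q)]; exact hfval _ _ _ hτ
      have hfq' : f q' = a τ' * q'.1 := by
        rw [← Prod.mk.eta (p := q')]; exact hfval _ _ _ hτ'
      rw [hs] at hτ
      have hτB1 := hτB _ _ _ (hs ▸ hδq) hTq hτ
      have hτB2 := hτB _ _ _ hδq' hTq' hτ'
      have key := aux_vert2 a hm (haL τ τ' hτB1 hτB2) hL0 hδq'
      rw [hτ, hτ'] at key
      rw [hfq, hfq', hs]
      exact key
  · obtain ⟨K, U, hUo, hpU, _, hlip⟩ := part1 p hp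
    exact ⟨K, U, hUo.mem_nhds hpU, hlip⟩
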